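/- If (i,j) is a match with rank L(i,j) = k ≥ 2, then there exists a match (i',j') with i' < i, j' < j, and L(i',j') = k - 1. -/

import Mathlib

/-- `s` is a common subsequence of `A` and `B`. -/
def IsCommonSubseq {α : Type*} (A B s : List α) : Prop :=
  s.Sublist A ∧ s.Sublist B

/-- `lcsL A B i j` is the maximum length of a common subsequence of the
length-`i` prefix of `A` and the length-`j` prefix of `B`. -/
noncomputable def lcsL {α : Type*} (A B : List α) (i j : ℕ) : ℕ :=
  sSup {k | ∃ s : List α, IsCommonSubseq (A.take i) (B.take j) s ∧ s.length = k}

/-- `s` is a longest common subsequence of the length-`i` prefix of `A` and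
the length-`j` prefix of `B`. -/
def IsLCS {α : Type*} (A B : List α) (i j : ℕ) (s : List α) : Prop :=
  IsCommonSubseq (A.take i) (B.take j) s ∧ s.length = lcsL A B i j

/-- The (1-indexed) pair `(i, j)` is a match: `a_i = b_j`. -/
def IsMatch {α : Type*} (A B : List α) (i j : ℕ) : Prop :=
  1 ≤ i ∧ i ≤ A.length ∧ 1 ≤ j ∧ j ≤ B.length ∧ A[i - 1]? = B[j - 1]?

/-- `e` is an embedding of the list `s` in the pair of prefixes `(A_i, B_j)`:
a sequence of (1-indexed) position pairs, strictly increasing in both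
coordinates, lying in `[1..i] × [1..j]`, such that the `t`-th pair points at
occurrences of the `t`-th character of `s` in both strings. -/
def IsEmbedding {α : Type*} (A B : List α) (i j : ℕ) (s : List α)
    (e : List (ℕ × ℕ)) : Prop :=
  e.Chain' (fun u v => u.1 < v.1 ∧ u.2 < v.2) ∧
  (∀ u ∈ e, 1 ≤ u.1 ∧ u.1 ≤ i ∧ 1 ≤ u.2 ∧ u.2 ≤ j) ∧
  List.Forall₂ (fun (u : ℕ × ℕ) (c : α) =>
    A[u.1 - 1]? = some c ∧ B[u.2 - 1]? = some c) e s

/-- The match `(i, j)` is antidominant of rank `r` within the rectangle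
`[1..I] × [1..J]`. -/
def IsAntidominant {α : Type*} (A B : List α) (r I J i j : ℕ) : Prop :=
  IsMatch A B i j ∧ i ≤ I ∧ j ≤ J ∧ lcsL A B i j = r ∧
  ¬ ∃ i' j', IsMatch A B i' j' ∧ lcsL A B i' j' = r ∧
    ((i' = i ∧ j < j' ∧ j' ≤ J) ∨ (j' = j ∧ i < i' ∧ i' ≤ I))

/-- `e` is an antidominant backtrace for `(i, j)`: a sequence of matches of
length `L(i,j)`, strictly increasing in both coordinates, such that (setting
the `(k+1)`-st entry to `(i+1, j+1)`) the `t`-th match is antidominant of rank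
`t` within the rectangle determined by the `(t+1)`-st entry minus one. -/
def IsAntidominantBacktrace {α : Type*} (A B : List α) (i j : ℕ)
    (e : List (ℕ × ℕ)) : Prop :=
  e.length = lcsL A B i j ∧
  e.Chain' (fun u v => u.1 < v.1 ∧ u.2 < v.2) ∧
  ∀ t < e.length,
    IsAntidominant A B (t + 1)
      (((e ++ [(i + 1, j + 1)]).getD (t + 1) (0, 0)).1 - 1)
      (((e ++ [(i + 1, j + 1)]).getD (t + 1) (0, 0)).2 - 1)
      (e.getD t (0, 0)).1 (e.getD t (0, 0)).2

lemma aux_last {α : Type*} : ∀ (l s : List α) (c : α), (s ++ [c]).Sublist l →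
    ∃ t, t < l.length ∧ s.Sublist (l.take t) ∧ l[t]? = some c := by
  intro l
  induction l with
  | nil => intro s c h; have := h.length_le; simp at this
  | cons x l ih =>
    intro s c h
    cases s with
    | nil =>
      simp only [List.nil_append] at h
      cases h with
      | cons _ h' =>
        obtain ⟨t, ht, hsub, hget⟩ := ih [] c h'
        exact ⟨t + 1, by simpa using ht, List.nil_sublist _, by simpa using hget⟩
      | cons_cons _ h' =>
        exact ⟨0, by simp, List.nil_sublist _, by simp⟩
    | cons y s' =>
      rw [List.cons_append] at h
      cases h with
      | cons _ h' =>
        obtain ⟨t, ht, hsub, hget⟩ := ih (y :: s') c h'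
        exact ⟨t + 1, by simpa using ht, by simpa using hsub.cons x,
          by simpa using hget⟩
      | cons_cons _ h' =>
        obtain ⟨t, ht, hsub, hget⟩ := ih s' c h'
        refine ⟨t + 1, by simpa using ht, ?_, by simpa using hget⟩
        simpa using hsub.cons₂ x

lemma lcs_bdd {α : Type*} (A B : List α) (i j : ℕ) :
    BddAbove {k | ∃ s : List α, IsCommonSubseq (A.take i) (B.take j) s ∧ s.length = k} :=
  ⟨(A.take i).length, fun k ⟨s, hs, hl⟩ => hl ▸ hs.1.length_le⟩

lemma lcs_mem {α : Type*} (A B : List α) (i j : ℕ) :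
    ∃ s, IsCommonSubseq (A.take i) (B.take j) s ∧ s.length = lcsL A B i j := by
  have h0 : (0:ℕ) ∈ {k | ∃ s : List α, IsCommonSubseq (A.take i) (B.take j) s ∧ s.length = k} :=
    ⟨[], ⟨List.nil_sublist _, List.nil_sublist _⟩, rfl⟩
  exact Nat.sSup_mem ⟨0, h0⟩ (lcs_bdd A B i j)

lemma lcs_ge {α : Type*} (A B : List α) (i j : ℕ) (s : List α)
    (hs : IsCommonSubseq (A.take i) (B.take j) s) : s.length ≤ lcsL A B i j :=
  le_csSup (lcs_bdd A B i j) ⟨s, hs, rfl⟩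

theorem stmt_9 {α : Type*} [DecidableEq α] (A B : List α) (m n : ℕ)
    (hA : A.length = m) (hB : B.length = n) (i j k : ℕ)
    (h : IsMatch A B i j) (hk : lcsL A B i j = k) (hk2 : 2 ≤ k) :
    ∃ i' j', IsMatch A B i' j' ∧ i' < i ∧ j' < j ∧
      lcsL A B i' j' = k - 1 := by
  obtain ⟨s, hs, hsl⟩ := lcs_mem A B i j
  rw [hk] at hsl
  obtain ⟨s₀, c, rfl⟩ : ∃ s₀ c, s = s₀ ++ [c] := by
    rcases s.eq_nil_or_concat with rfl | ⟨s₀, c, rfl⟩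
    · simp at hsl; omega
    · exact ⟨s₀, c, List.concat_eq_append⟩
  obtain ⟨s₁, c₁, rfl⟩ : ∃ s₁ c₁, s₀ = s₁ ++ [c₁] := by
    rcases s₀.eq_nil_or_concat with rfl | ⟨s₁, c₁, rfl⟩
    · simp at hsl; omega
    · exact ⟨s₁, c₁, List.concat_eq_append⟩
  simp only [List.length_append, List.length_singleton] at hsl
  -- apply aux_last twice on the A-side
  obtain ⟨tA, htA, hsubA, _⟩ := aux_last _ _ _ hs.1
  obtain ⟨tA', htA', hsubA', hgetA'⟩ := aux_last _ _ _ hsubA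
  obtain ⟨tB, htB, hsubB, _⟩ := aux_last _ _ _ hs.2
  obtain ⟨tB', htB', hsubB', hgetB'⟩ := aux_last _ _ _ hsubB
  have hiA : (A.take i).length ≤ i := by simp
  have hjB : (B.take j).length ≤ j := by simp
  have htA2 : tA' < tA := lt_of_lt_of_le htA' (by simp)
  have htB2 : tB' < tB := lt_of_lt_of_le htB' (by simp)
  have hAlen : tA' < A.length := lt_of_lt_of_le htA' (by
    calc ((A.take i).take tA).length ≤ (A.take i).length := by simp
    _ ≤ A.length := by simp)
  have hBlen : tB' < B.length := lt_of_lt_of_le htB' (by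
    calc ((B.take j).take tB).length ≤ (B.take j).length := by simp
    _ ≤ B.length := by simp)
  have htA3 : tA < i := lt_of_lt_of_le htA hiA
  have htB3 : tB < j := lt_of_lt_of_le htB hjB
  have hgetA : A[tA']? = some c₁ := by
    rw [List.getElem?_take, if_pos htA2, List.getElem?_take, if_pos (by omega)] at hgetA'
    exact hgetA'
  have hgetB : B[tB']? = some c₁ := by
    rw [List.getElem?_take, if_pos htB2, List.getElem?_take, if_pos (by omega)] at hgetB'
    exact hgetB'
  refine ⟨tA' + 1, tB' + 1, ⟨le_add_self, by omega, le_add_self, by omega, by simpa using hgetA.trans hgetB.symm⟩,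
    by omega, by omega, ?_⟩
  -- common subsequence s₁ ++ [c₁] of A.take (tA'+1), B.take (tB'+1)
  have hsubA2 : (s₁ ++ [c₁]).Sublist (A.take (tA' + 1)) := by
    have h1 : (s₁ ++ [c₁]).Sublist (((A.take i).take tA).take (tA' + 1)) := by
      rw [List.take_succ, hgetA']
      exact hsubA'.append (List.Sublist.refl _)
    rwa [List.take_take, Nat.min_eq_left htA2, List.take_take,
      Nat.min_eq_left (by omega)] at h1
  have hsubB2 : (s₁ ++ [c₁]).Sublist (B.take (tB' + 1)) := by
    have h1 : (s₁ ++ [c₁]).Sublist (((B.take j).take tB).take (tB' + 1)) := by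
      rw [List.take_succ, hgetB']
      exact hsubB'.append (List.Sublist.refl _)
    rwa [List.take_take, Nat.min_eq_left htB2, List.take_take,
      Nat.min_eq_left (by omega)] at h1
  have hge : k - 1 ≤ lcsL A B (tA' + 1) (tB' + 1) := by
    have := lcs_ge A B (tA' + 1) (tB' + 1) _ ⟨hsubA2, hsubB2⟩
    simp only [List.length_append, List.length_singleton] at this
    omega
  have hle : lcsL A B (tA' + 1) (tB' + 1) ≤ k - 1 := by
    obtain ⟨u, hu, hul⟩ := lcs_mem A B (tA' + 1) (tB' + 1)
    obtain ⟨hi1, hiA', hj1, hjB', hab⟩ := h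
    obtain ⟨a, ha⟩ : ∃ a, A[i-1]? = some a := by
      refine ⟨A[i-1]'(by omega), ?_⟩
      exact List.getElem?_eq_getElem _
    have hb : B[j-1]? = some a := hab ▸ ha
    have hAi : A.take i = A.take (i - 1) ++ [a] := by
      have : i = (i - 1) + 1 := by omega
      rw [this, List.take_succ, ha]; rfl
    have hBj : B.take j = B.take (j - 1) ++ [a] := by
      have : j = (j - 1) + 1 := by omega
      rw [this, List.take_succ, hb]; rfl
    have hmonoA : (A.take (tA' + 1)).Sublist (A.take (i - 1)) := by
      rw [show A.take (tA' + 1) = (A.take (i - 1)).take (tA' + 1) from by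
        rw [List.take_take, Nat.min_eq_left (by omega)]]
      exact List.take_sublist _ _
    have hmonoB : (B.take (tB' + 1)).Sublist (B.take (j - 1)) := by
      rw [show B.take (tB' + 1) = (B.take (j - 1)).take (tB' + 1) from by
        rw [List.take_take, Nat.min_eq_left (by omega)]]
      exact List.take_sublist _ _
    have hAcs : (u ++ [a]).Sublist (A.take i) := by
      rw [hAi]; exact (hu.1.trans hmonoA).append (List.Sublist.refl _)
    have hBcs : (u ++ [a]).Sublist (B.take j) := by
      rw [hBj]; exact (hu.2.trans hmonoB).append (List.Sublist.refl _)
    have hle2 := lcs_ge A B i j _ ⟨hAcs, hBcs⟩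
    rw [hk] at hle2
    simp only [List.length_append, List.length_singleton] at hle2
    omega
  omega
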